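/- Let w : Fin 3 → Fin 3 → ℝ satisfy w i i = 1/2 for all i and w i r = 1 − w r i for all i, r. For weights λ : Fin 3 → ℝ define p i(λ) = Σ_{r ∈ Fin 3} λ r · w r i. Then the following are equivalent: (a) for every choice of weights λ with λ r > 0 for all r and λ 0 + λ 1 + λ 2 = 1, one has p 0(λ) = p 1(λ) = p 2(λ); (b) w 1 0 = w 2 0 = w 2 1 = 1/2. -/

import Mathlib

open Finset

/-- The weighted relative effects are equal for *every* choice of positive weights
summing to one iff all pairwise effects equal `1/2`. -/
theorem equal_effects_all_weights_iff (w : Fin 3 → Fin 3 → ℝ)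
    (hdiag : ∀ i, w i i = 1/2) (hskew : ∀ i r, w i r = 1 - w r i) :
    (∀ l : Fin 3 → ℝ, (∀ r, 0 < l r) → l 0 + l 1 + l 2 = 1 →
      ((∑ r : Fin 3, l r * w r 0) = (∑ r : Fin 3, l r * w r 1) ∧
       (∑ r : Fin 3, l r * w r 1) = (∑ r : Fin 3, l r * w r 2))) ↔
    (w 1 0 = 1/2 ∧ w 2 0 = 1/2 ∧ w 2 1 = 1/2) := by
  have h00 := hdiag 0
  have h11 := hdiag 1
  have h22 := hdiag 2
  have h01 := hskew 0 1
  have h02 := hskew 0 2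
  have h12 := hskew 1 2
  constructor
  · intro h
    have h1 := h (fun _ => 1/3) (fun r => by norm_num) (by norm_num)
    have h2 := h ![1/2, 1/4, 1/4]
      (fun r => by fin_cases r <;> norm_num) (by norm_num [Matrix.cons_val_two, Matrix.vecHead, Matrix.vecTail])
    simp [Fin.sum_univ_three] at h1 h2
    refine ⟨?_, ?_, ?_⟩ <;> linarith [h1.1, h1.2, h2.1, h2.2]
  · rintro ⟨a, b, c⟩ l _ hsum
    simp only [Fin.sum_univ_three, a, b, c, h00, h11, h22, h01, h02, h12]
    norm_num
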